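/- Let A be a real m × n matrix and b ∈ ℝᵐ, and define f(x) := ‖Ax + b‖₀, the number of nonzero components of Ax + b. Then for every x, w ∈ ℝⁿ, the ordinary directional derivative limit lim_{t↓0}(f(x + t w) − f（x))/t exists in [−∞, +∞] and equals the subderivative df(x)(w); moreover df(x)(w) = 0 if S(Aw) ⊆ S(Ax + b) and df(x)(w) = +∞ otherwise, where S(y) := {i : yᵢ ≠ 0} denotes the support of y ∈ ℝᵐ. -/

import Mathlib

set_option maxHeartbeats 1000000


open Filter Topology Set

/-- The subderivative `df(x̄)(w) := liminf_{t↓0, w'→w} (f(x̄ + t w') − f(x̄))/t`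
of an extended-real-valued function. -/
noncomputable def subderiv {n : ℕ} (f : EuclideanSpace ℝ (Fin n) → EReal)
    (x w : EuclideanSpace ℝ (Fin n)) : EReal :=
  Filter.liminf
    (fun p : ℝ × EuclideanSpace ℝ (Fin n) =>
      (((p.1)⁻¹ : ℝ) : EReal) * (f (x + p.1 • p.2) - f x))
    ((𝓝[>] (0:ℝ)) ×ˢ 𝓝 w)

/-- `F` is semi-differentiable at `x` for the direction `w` with semi-derivative `d`:
`d = lim_{t↓0, w'→w} (F(x + t w') − F(x))/t`. -/
def HasSemiderivAt {E V : Type*} [NormedAddCommGroup E] [NormedSpace ℝ E]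
    [NormedAddCommGroup V] [NormedSpace ℝ V]
    (F : E → V) (x w : E) (d : V) : Prop :=
  Filter.Tendsto (fun p : ℝ × E => (p.1)⁻¹ • (F (x + p.1 • p.2) - F x))
    ((𝓝[>] (0:ℝ)) ×ˢ 𝓝 w) (𝓝 d)

/-- The zero "norm" composed with an affine map: `f(x) = ‖Ax + b‖₀`, viewed as an
extended-real-valued function. -/
noncomputable def zeroNormAffine {n m : ℕ} (A : Matrix (Fin m) (Fin n) ℝ)
    (b : Fin m → ℝ) (z : EuclideanSpace ℝ (Fin n)) : EReal :=
  ((Set.ncard {i : Fin m | A.mulVec z i + b i ≠ 0} : ℝ) : EReal)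

section aux
variable {n m : ℕ} (A : Matrix (Fin m) (Fin n) ℝ) (b : Fin m → ℝ)
  (x w : EuclideanSpace ℝ (Fin n))

lemma mulVec_affine (t : ℝ) (w' : EuclideanSpace ℝ (Fin n)) (i : Fin m) :
    A.mulVec (x + t • w') i = A.mulVec x i + t * A.mulVec w' i := by
  unfold Matrix.mulVec dotProduct
  simp only [PiLp.add_apply, PiLp.smul_apply, Pi.add_apply, Pi.smul_apply, smul_eq_mul, mul_add, Finset.sum_add_distrib,
    Finset.mul_sum]
  congr 1; apply Finset.sum_congr rfl; intros; ring

lemma cont_mulVec (i : Fin m) :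
    Continuous fun z : EuclideanSpace ℝ (Fin n) => A.mulVec z i := by
  unfold Matrix.mulVec dotProduct
  exact continuous_finset_sum _ fun j _ => continuous_const.mul (PiLp.continuous_apply 2 _ j)

lemma zna_eq (t : ℝ) (w' : EuclideanSpace ℝ (Fin n)) :
    zeroNormAffine A b (x + t • w') =
      ((Set.ncard {i : Fin m | (A.mulVec x i + b i) + t * A.mulVec w' i ≠ 0} : ℝ) : EReal) := by
  unfold zeroNormAffine
  have hset : {i : Fin m | A.mulVec (x + t • w') i + b i ≠ 0} =
      {i : Fin m | (A.mulVec x i + b i) + t * A.mulVec w' i ≠ 0} := by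
    ext i
    simp only [mem_setOf_eq, mulVec_affine]
    constructor <;> intro h <;> intro h2 <;> apply h <;> linarith
  rw [WithLp.ofLp_add, WithLp.ofLp_smul, hset]

end aux


theorem zero_norm_directionally_lower_regular {n m : ℕ}
    (A : Matrix (Fin m) (Fin n) ℝ) (b : Fin m → ℝ)
    (x w : EuclideanSpace ℝ (Fin n)) :
    Filter.Tendsto
        (fun t : ℝ => ((t⁻¹ : ℝ) : EReal) * (zeroNormAffine A b (x + t • w) - zeroNormAffine A b x))
        (𝓝[>] (0:ℝ)) (𝓝 (subderiv (zeroNormAffine A b) x w)) ∧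
      ({i : Fin m | A.mulVec w i ≠ 0} ⊆ {i : Fin m | A.mulVec x i + b i ≠ 0} →
        subderiv (zeroNormAffine A b) x w = 0) ∧
      (¬ {i : Fin m | A.mulVec w i ≠ 0} ⊆ {i : Fin m | A.mulVec x i + b i ≠ 0} →
        subderiv (zeroNormAffine A b) x w = ⊤) := by
  classical
  set L : Filter (ℝ × EuclideanSpace ℝ (Fin n)) := (𝓝[>] (0:ℝ)) ×ˢ 𝓝 w with hL
  set c : Fin m → ℝ := fun i => A.mulVec x i + b i with hc
  set N : ℝ × EuclideanSpace ℝ (Fin n) → ℕ := fun p => Set.ncard {i : Fin m | c i + p.1 * A.mulVec p.2 i ≠ 0} with hN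
  set N0 : ℕ := Set.ncard {i : Fin m | c i ≠ 0} with hN0
  set q : ℝ × EuclideanSpace ℝ (Fin n) → EReal := fun p =>
    (((p.1)⁻¹ : ℝ) : EReal) * (zeroNormAffine A b (x + p.1 • p.2) - zeroNormAffine A b x) with hqdef
  have hsubd : subderiv (zeroNormAffine A b) x w = Filter.liminf q L := by
    rw [hqdef, hL]; rfl
  have hzx : zeroNormAffine A b x = ((N0 : ℝ) : EReal) := rfl
  -- formula for q
  have hq : ∀ p : ℝ × EuclideanSpace ℝ (Fin n), q p = (((p.1⁻¹ * ((N p : ℝ) - (N0 : ℝ))) : ℝ) : EReal) := by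
    intro p
    rw [hqdef]
    simp only
    rw [zna_eq A b x p.1 p.2, hzx, ← EReal.coe_sub, ← EReal.coe_mul]
  -- the curve t ↦ (t, w)
  have hcurve : Tendsto (fun t : ℝ => (t, w)) (𝓝[>] (0:ℝ)) L :=
    tendsto_id.prodMk tendsto_const_nhds
  have hLle : L ≤ 𝓝 ((0:ℝ), w) := by
    rw [nhds_prod_eq]
    exact Filter.prod_mono nhdsWithin_le_nhds le_rfl
  have hpos : ∀ᶠ p : ℝ × EuclideanSpace ℝ (Fin n) in L, 0 < p.1 := by
    have : ∀ᶠ t : ℝ in 𝓝[>] (0:ℝ), 0 < t := eventually_mem_nhdsWithin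
    exact this.prod_inl (𝓝 w)
  -- eventually indices in S0 survive
  have hE1 : ∀ᶠ p : ℝ × EuclideanSpace ℝ (Fin n) in L, ∀ i, c i ≠ 0 → c i + p.1 * A.mulVec p.2 i ≠ 0 := by
    rw [eventually_all]
    intro i
    by_cases hci : c i = 0
    · exact Eventually.of_forall fun _ h => absurd hci h
    · have ht : Tendsto (fun p : ℝ × EuclideanSpace ℝ (Fin n) => c i + p.1 * A.mulVec p.2 i) L (𝓝 (c i)) := by
        have hcont : Continuous fun p : ℝ × EuclideanSpace ℝ (Fin n) => c i + p.1 * A.mulVec p.2 i :=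
          continuous_const.add (continuous_fst.mul ((cont_mulVec A i).comp continuous_snd))
        have := (hcont.tendsto ((0:ℝ), w)).mono_left hLle
        simpa using this
      exact (ht.eventually_ne hci).mono fun p h _ => h
  have hmono : ∀ᶠ p : ℝ × EuclideanSpace ℝ (Fin n) in L, N0 ≤ N p := by
    filter_upwards [hE1] with p hp
    exact Set.ncard_le_ncard (fun i hi => hp i hi) (Set.toFinite _)
  have hqnonneg : ∀ᶠ p : ℝ × EuclideanSpace ℝ (Fin n) in L, (0 : EReal) ≤ q p := by
    filter_upwards [hpos, hmono] with p hp hm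
    rw [hq p]
    have : (0:ℝ) ≤ p.1⁻¹ * ((N p : ℝ) - (N0 : ℝ)) := by
      apply mul_nonneg (le_of_lt (inv_pos.2 hp))
      have : (N0 : ℝ) ≤ (N p : ℝ) := Nat.cast_le.2 hm
      linarith
    exact_mod_cast this
  by_cases hS : {i : Fin m | A.mulVec w i ≠ 0} ⊆ {i : Fin m | A.mulVec x i + b i ≠ 0}
  · -- S(Aw) ⊆ S(Ax+b): subderiv = 0
    -- along the curve, q is eventually 0
    have hcurve0 : ∀ᶠ t : ℝ in 𝓝[>] (0:ℝ), q (t, w) = 0 := by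
      filter_upwards [hcurve.eventually hE1] with t ht
      rw [hq (t, w)]
      have hset : {i : Fin m | c i + t * A.mulVec w i ≠ 0} = {i : Fin m | c i ≠ 0} := by
        ext i
        simp only [mem_setOf_eq]
        by_cases hci : c i = 0
        · have hwi : A.mulVec w i = 0 := by
            by_contra hwi
            exact (hS hwi) hci
          simp [hci, hwi]
        · exact iff_of_true (ht i hci) hci
      have hNe : N (t, w) = N0 := by
        simp only [hN, hN0]
        rw [hset]
      rw [hNe]
      simp
    have hlim0 : Filter.liminf q L = 0 := by
      apply le_antisymm
      · calc Filter.liminf q L ≤ Filter.liminf q (Filter.map (fun t : ℝ => (t, w)) (𝓝[>] (0:ℝ))) :=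
              liminf_le_liminf_of_le hcurve
          _ = Filter.liminf (fun t => q (t, w)) (𝓝[>] (0:ℝ)) :=
              (Filter.liminf_comp q (fun t : ℝ => (t, w)) (𝓝[>] (0:ℝ))).symm
          _ = Filter.liminf (fun _ : ℝ => (0:EReal)) (𝓝[>] (0:ℝ)) := liminf_congr hcurve0
          _ = 0 := liminf_const 0
      · exact le_liminf_of_le (by isBoundedDefault) hqnonneg
    refine ⟨?_, fun _ => hsubd.trans hlim0, fun h => absurd hS h⟩
    rw [hsubd, hlim0]
    have : Tendsto (fun _ : ℝ => (0:EReal)) (𝓝[>] (0:ℝ)) (𝓝 0) := tendsto_const_nhds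
    exact this.congr' (hcurve0.mono fun t ht => ht.symm)
  · -- otherwise: subderiv = ⊤
    obtain ⟨i0, hi0w, hi0c⟩ : ∃ i, A.mulVec w i ≠ 0 ∧ c i = 0 := by
      rcases not_subset.1 hS with ⟨i, hi1, hi2⟩
      exact ⟨i, hi1, not_not.1 hi2⟩
    have hE2 : ∀ᶠ p : ℝ × EuclideanSpace ℝ (Fin n) in L, A.mulVec p.2 i0 ≠ 0 := by
      have ht : Tendsto (fun p : ℝ × EuclideanSpace ℝ (Fin n) => A.mulVec p.2 i0) L (𝓝 (A.mulVec w i0)) :=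
        (((cont_mulVec A i0).comp continuous_snd).tendsto ((0:ℝ), w)).mono_left hLle
      exact ht.eventually_ne hi0w
    have hbig : ∀ᶠ p : ℝ × EuclideanSpace ℝ (Fin n) in L, N0 + 1 ≤ N p := by
      filter_upwards [hE1, hE2, hpos] with p hp1 hp2 hppos
      have hmemi0 : i0 ∈ {i : Fin m | c i + p.1 * A.mulVec p.2 i ≠ 0} := by
        simp only [mem_setOf_eq, hi0c, zero_add]
        exact mul_ne_zero (ne_of_gt hppos) hp2
      have hsub : insert i0 {i : Fin m | c i ≠ 0} ⊆ {i : Fin m | c i + p.1 * A.mulVec p.2 i ≠ 0} := by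
        intro i hi
        rcases Set.mem_insert_iff.1 hi with rfl | hi
        · exact hmemi0
        · exact hp1 i hi
      have h1 : (insert i0 {i : Fin m | c i ≠ 0}).ncard = N0 + 1 :=
        Set.ncard_insert_of_notMem (by simp [hi0c]) (Set.toFinite _)
      calc N0 + 1 = (insert i0 {i : Fin m | c i ≠ 0}).ncard := h1.symm
        _ ≤ N p := Set.ncard_le_ncard hsub (Set.toFinite _)
    have hqtop : Tendsto q L (𝓝 ⊤) := by
      rw [EReal.tendsto_nhds_top_iff_real]
      intro M
      have hinv : Tendsto (fun p : ℝ × EuclideanSpace ℝ (Fin n) => (p.1)⁻¹) L atTop :=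
        tendsto_inv_nhdsGT_zero.comp tendsto_fst
      filter_upwards [hbig, hpos, hinv.eventually (eventually_gt_atTop M)] with p hb hp hM
      rw [hq p]
      have h1 : (1:ℝ) ≤ (N p : ℝ) - (N0 : ℝ) := by
        have : ((N0:ℝ) + 1) ≤ (N p : ℝ) := by exact_mod_cast hb
        linarith
      have : M < p.1⁻¹ * ((N p : ℝ) - (N0 : ℝ)) := by
        calc M < p.1⁻¹ := hM
          _ = p.1⁻¹ * 1 := (mul_one _).symm
          _ ≤ p.1⁻¹ * ((N p : ℝ) - (N0 : ℝ)) :=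
              mul_le_mul_of_nonneg_left h1 (le_of_lt (inv_pos.2 hp))
      exact_mod_cast this
    have hlimtop : Filter.liminf q L = ⊤ := hqtop.liminf_eq
    refine ⟨?_, fun h => absurd h hS, fun _ => hsubd.trans hlimtop⟩
    rw [hsubd, hlimtop]
    exact hqtop.comp hcurve
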